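/- Let (A, p, 0, ½, 1) be a mobi algebra. Then for all a, b, c, d, a1, a2, b1, b2 ∈ A: (1) p(p(a1,c,b1), ½, p(a2,c,b2)) = p(p(a2,c,b1), ½, p(a1,c,b2)); (2) p(p(a,c,b), ½, p(b,c,a)) = p(a, ½, b); (3) p(p(a, p(1,c,0), b), ½, p(a,c,d)) = p(a, ½, p(b,c,d)). -/
import Mathlib


/-- A mobi algebra: a set with a ternary operation `p` and constants `e0`, `half`, `e1`. -/
structure MobiAlgebra (A : Type*) where
  p : A → A → A → A
  e0 : A
  half : A
  e1 : A
  A1 : p e1 half e0 = half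
  A2 : ∀ a, p e0 a e1 = a
  A3 : ∀ a b, p a b a = a
  A4 : ∀ a b, p a e0 b = a
  A5 : ∀ a b, p a e1 b = b
  A6 : ∀ a a' b, p a half b = p a' half b → a = a'
  A7 : ∀ a b c1 c2 c3, p a (p c1 c2 c3) b = p (p a c1 b) c2 (p a c3 b)
  A8 : ∀ a1 a2 b1 b2 c,
    p (p a1 c b1) half (p a2 c b2) = p (p a1 half a2) c (p b1 half b2)

/-- Proposition 2.4: properties (P41)-(P43) of a mobi algebra. -/
lemma mobi_half_comm {A : Type*} (M : MobiAlgebra A) (x y : A) :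
    M.p x M.half y = M.p y M.half x := by
  have h : M.p y M.half x = M.p y (M.p M.e1 M.half M.e0) x := by rw [M.A1]
  rw [h, M.A7, M.A5, M.A4]

theorem mobi_prop_p4 {A : Type*} (M : MobiAlgebra A)
    (a b c d a1 a2 b1 b2 : A) :
    M.p (M.p a1 c b1) M.half (M.p a2 c b2) =
      M.p (M.p a2 c b1) M.half (M.p a1 c b2) ∧
    M.p (M.p a c b) M.half (M.p b c a) = M.p a M.half b ∧
    M.p (M.p a (M.p M.e1 c M.e0) b) M.half (M.p a c d) =
      M.p a M.half (M.p b c d) := by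
  refine ⟨?_, ?_, ?_⟩
  · rw [M.A8, M.A8, mobi_half_comm M a1 a2]
  · rw [M.A8, mobi_half_comm M b a, M.A3]
  · have h1 : M.p a (M.p M.e1 c M.e0) b = M.p b c a := by
      rw [M.A7, M.A5, M.A4]
    have h2 : M.p a M.half (M.p b c d) = M.p (M.p a c a) M.half (M.p b c d) := by
      rw [M.A3]
    rw [h1, h2, M.A8, M.A8, mobi_half_comm M a b]
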